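/- Suppose A_{I,J} is an r×r submatrix of A with |det(A_{I,J})| = ν·|det(A_◇)| for some ν ∈ (0,1], where A_◇ is a maximal-volume r×r submatrix, and suppose A_{I,J} is dominant. Then the cross approximation A_r = A_{:,J} A_{I,J}^{-1} A_{I,:} satisfies ‖A − A_r‖_C ≤ (r+1)·σ_{r+1}(A) / (ν·√(1 + Σ_{k=1}^r σ_{r+1}(A)²/σ_k(A)²)). -/

import Mathlib

open Matrix BigOperators Filter

noncomputable def sval {m n : ℕ} (A : Matrix (Fin m) (Fin n) ℝ) (k : Fin n) : ℝ :=
  Real.sqrt ((show (Aᵀ * A).IsHermitian from Matrix.isHermitian_iff_isSymm.mpr (by rw [Matrix.IsSymm, Matrix.transpose_mul, Matrix.transpose_transpose])).eigenvalues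
    (Tuple.sort (show (Aᵀ * A).IsHermitian from Matrix.isHermitian_iff_isSymm.mpr (by rw [Matrix.IsSymm, Matrix.transpose_mul, Matrix.transpose_transpose])).eigenvalues (Fin.rev k)))

noncomputable def chebNorm {m n : ℕ} (A : Matrix (Fin m) (Fin n) ℝ) : ℝ :=
  ⨆ i, ⨆ j, |A i j|

noncomputable def frobNorm {m n : ℕ} (A : Matrix (Fin m) (Fin n) ℝ) : ℝ :=
  Real.sqrt (∑ i, ∑ j, (A i j) ^ 2)


section Rayleigh
variable {N : ℕ} {M : Matrix (Fin N) (Fin N) ℝ} (hM : M.IsHermitian)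

noncomputable def sortEig (k : Fin N) : ℝ :=
  hM.eigenvalues (Tuple.sort hM.eigenvalues (Fin.rev k))

lemma sortEig_anti {k l : Fin N} (h : k ≤ l) : sortEig hM l ≤ sortEig hM k := by
  have := Tuple.monotone_sort hM.eigenvalues (a := Fin.rev l) (b := Fin.rev k) (Fin.rev_le_rev.mpr h)
  simpa [sortEig] using this

lemma sum_comp_sortEig (g : ℝ → ℝ) : ∑ k, g (sortEig hM k) = ∑ i, g (hM.eigenvalues i) := by
  rw [← Equiv.sum_comp ((Fin.revPerm).trans (Tuple.sort hM.eigenvalues))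
    (fun i => g (hM.eigenvalues i))]
  rfl

lemma inner_self_repr (x : EuclideanSpace ℝ (Fin N)) :
    (inner ℝ x x : ℝ) = ∑ i, (hM.eigenvectorBasis.repr x i) ^ 2 := by
  rw [← LinearIsometryEquiv.inner_map_map hM.eigenvectorBasis.repr x x]
  simp only [PiLp.inner_apply, RCLike.inner_apply]
  exact Finset.sum_congr rfl fun i _ => by simp [sq]

lemma toEuclideanLin_eigenvectorBasis (i : Fin N) :
    Matrix.toEuclideanLin M (hM.eigenvectorBasis i) = hM.eigenvalues i • hM.eigenvectorBasis i := by
  apply PiLp.ext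
  intro j
  have := congrFun (hM.mulVec_eigenvectorBasis i) j
  simpa [Matrix.toEuclideanLin_apply] using this

lemma repr_toEuclideanLin (x : EuclideanSpace ℝ (Fin N)) (i : Fin N) :
    hM.eigenvectorBasis.repr (Matrix.toEuclideanLin M x) i
      = hM.eigenvalues i * hM.eigenvectorBasis.repr x i := by
  rw [OrthonormalBasis.repr_apply_apply, OrthonormalBasis.repr_apply_apply]
  have hsymm : (Matrix.toEuclideanLin M).IsSymmetric := (Matrix.isHermitian_iff_isSymmetric).mp hM
  rw [← hsymm (hM.eigenvectorBasis i) x, toEuclideanLin_eigenvectorBasis hM i,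
    inner_smul_left]
  simp

lemma inner_toEuclideanLin_repr (x : EuclideanSpace ℝ (Fin N)) :
    (inner ℝ x (Matrix.toEuclideanLin M x) : ℝ)
      = ∑ i, hM.eigenvalues i * (hM.eigenvectorBasis.repr x i) ^ 2 := by
  rw [← LinearIsometryEquiv.inner_map_map hM.eigenvectorBasis.repr x (Matrix.toEuclideanLin M x)]
  simp only [PiLp.inner_apply, RCLike.inner_apply]
  refine Finset.sum_congr rfl fun i _ => ?_
  rw [repr_toEuclideanLin hM x i]
  simp [sq]; ring

lemma mem_span_iff_repr (S : Set (Fin N)) (x : EuclideanSpace ℝ (Fin N)) :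
    x ∈ Submodule.span ℝ (⇑hM.eigenvectorBasis '' S) ↔
      ∀ i ∉ S, hM.eigenvectorBasis.repr x i = 0 := by
  rw [← hM.eigenvectorBasis.coe_toBasis, Module.Basis.mem_span_image]
  constructor
  · intro h i hi
    rw [← hM.eigenvectorBasis.coe_toBasis_repr_apply]
    by_contra hne
    exact hi (h (Finsupp.mem_support_iff.mpr hne))
  · intro h i hi
    rw [Finset.mem_coe, Finsupp.mem_support_iff, hM.eigenvectorBasis.coe_toBasis_repr_apply] at hi
    by_contra hiS
    exact hi (h i hiS)

noncomputable def topSet (k : Fin N) : Finset (Fin N) :=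
  Finset.image (Tuple.sort hM.eigenvalues) (Finset.Ici (Fin.rev k))

noncomputable def botSetE (k : Fin N) : Finset (Fin N) :=
  Finset.image (Tuple.sort hM.eigenvalues) (Finset.Iic (Fin.rev k))

lemma card_topSet (k : Fin N) : (topSet hM k).card = k + 1 := by
  rw [topSet, Finset.card_image_of_injective _ (Tuple.sort hM.eigenvalues).injective,
    Fin.card_Ici, Fin.val_rev]
  omega

lemma card_botSetE (k : Fin N) : (botSetE hM k).card = N - k := by
  rw [botSetE, Finset.card_image_of_injective _ (Tuple.sort hM.eigenvalues).injective,
    Fin.card_Iic, Fin.val_rev]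
  have := k.isLt
  omega

lemma sortEig_le_of_mem_top {k : Fin N} {i : Fin N} (hi : i ∈ topSet hM k) :
    sortEig hM k ≤ hM.eigenvalues i := by
  obtain ⟨j, hj, rfl⟩ := Finset.mem_image.mp hi
  exact Tuple.monotone_sort hM.eigenvalues (Finset.mem_Ici.mp hj)

lemma le_sortEig_of_mem_bot {k : Fin N} {i : Fin N} (hi : i ∈ botSetE hM k) :
    hM.eigenvalues i ≤ sortEig hM k := by
  obtain ⟨j, hj, rfl⟩ := Finset.mem_image.mp hi
  exact Tuple.monotone_sort hM.eigenvalues (Finset.mem_Iic.mp hj)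

lemma finrank_span_onb {N : ℕ} {E : Type*} [NormedAddCommGroup E] [InnerProductSpace ℝ E]
    (b : OrthonormalBasis (Fin N) ℝ E) (S : Finset (Fin N)) :
    Module.finrank ℝ (Submodule.span ℝ (⇑b '' ↑S)) = S.card := by
  classical
  have hb : ⇑b.toBasis = ⇑b := b.coe_toBasis
  have hbli : LinearIndependent ℝ ⇑b := hb ▸ b.toBasis.linearIndependent
  have hbinj : Function.Injective ⇑b := hb ▸ b.toBasis.injective
  have hli : LinearIndependent ℝ ((↑) : (⇑b '' ↑S) → E) := by
    have h1 : LinearIndependent ℝ (⇑b ∘ (fun x : (S : Set (Fin N)) => (x : Fin N))) :=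
      hbli.comp _ Subtype.val_injective
    have h2 := h1.linearIndepOn_id
    rwa [Set.range_comp, Subtype.range_coe] at h2
  rw [finrank_span_set_eq_card hli, Set.toFinset_image, Finset.card_image_of_injective _ hbinj]
  simp

lemma mul_inner_le_of_mem_top {k : Fin N} {x : EuclideanSpace ℝ (Fin N)}
    (hx : x ∈ Submodule.span ℝ (⇑hM.eigenvectorBasis '' ↑(topSet hM k))) :
    sortEig hM k * (inner ℝ x x : ℝ) ≤ (inner ℝ x (Matrix.toEuclideanLin M x) : ℝ) := by
  rw [inner_self_repr hM, inner_toEuclideanLin_repr hM, Finset.mul_sum]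
  refine Finset.sum_le_sum fun i _ => ?_
  by_cases hi : i ∈ topSet hM k
  · exact mul_le_mul_of_nonneg_right (sortEig_le_of_mem_top hM hi) (sq_nonneg _)
  · rw [(mem_span_iff_repr hM _ x).mp hx i hi]
    simp

lemma inner_le_mul_of_mem_bot {k : Fin N} {x : EuclideanSpace ℝ (Fin N)}
    (hx : x ∈ Submodule.span ℝ (⇑hM.eigenvectorBasis '' ↑(botSetE hM k))) :
    (inner ℝ x (Matrix.toEuclideanLin M x) : ℝ) ≤ sortEig hM k * (inner ℝ x x : ℝ) := by
  rw [inner_self_repr hM, inner_toEuclideanLin_repr hM, Finset.mul_sum]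
  refine Finset.sum_le_sum fun i _ => ?_
  by_cases hi : i ∈ botSetE hM k
  · exact mul_le_mul_of_nonneg_right (le_sortEig_of_mem_bot hM hi) (sq_nonneg _)
  · rw [(mem_span_iff_repr hM _ x).mp hx i hi]
    simp

end Rayleigh

section Compare

lemma sortEig_le_sortEig {N₁ N₂ : ℕ} {M₁ : Matrix (Fin N₁) (Fin N₁) ℝ}
    {M₂ : Matrix (Fin N₂) (Fin N₂) ℝ} (hM₁ : M₁.IsHermitian) (hM₂ : M₂.IsHermitian)
    (Q : EuclideanSpace ℝ (Fin N₁) →ₗ[ℝ] EuclideanSpace ℝ (Fin N₂))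
    (hQnorm : ∀ x, (inner ℝ (Q x) (Q x) : ℝ) = (inner ℝ x x : ℝ))
    (hQray : ∀ x, (inner ℝ x (Matrix.toEuclideanLin M₁ x) : ℝ)
      ≤ (inner ℝ (Q x) (Matrix.toEuclideanLin M₂ (Q x)) : ℝ))
    (k₁ : Fin N₁) (k₂ : Fin N₂) (hk : (k₁ : ℕ) = (k₂ : ℕ)) :
    sortEig hM₁ k₁ ≤ sortEig hM₂ k₂ := by
  classical
  set V : Submodule ℝ (EuclideanSpace ℝ (Fin N₁)) :=
    Submodule.span ℝ (⇑hM₁.eigenvectorBasis '' ↑(topSet hM₁ k₁)) with hV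
  set W : Submodule ℝ (EuclideanSpace ℝ (Fin N₂)) :=
    Submodule.span ℝ (⇑hM₂.eigenvectorBasis '' ↑(botSetE hM₂ k₂)) with hW
  have hVrank : Module.finrank ℝ V = k₁ + 1 := by
    rw [hV, finrank_span_onb, card_topSet]
  have hWrank : Module.finrank ℝ W = N₂ - k₂ := by
    rw [hW, finrank_span_onb, card_botSetE]
  -- comap Q W has finrank ≥ N₁ - k₂
  have hcomap : N₁ - k₁ ≤ Module.finrank ℝ (Submodule.comap Q W) := by
    have hker : Submodule.comap Q W = LinearMap.ker (W.mkQ.comp Q) := by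
      rw [LinearMap.ker_comp, Submodule.ker_mkQ]
    have h1 := LinearMap.finrank_range_add_finrank_ker (W.mkQ.comp Q)
    have h2 : Module.finrank ℝ (LinearMap.range (W.mkQ.comp Q))
        ≤ Module.finrank ℝ (EuclideanSpace ℝ (Fin N₂) ⧸ W) :=
      Submodule.finrank_le _
    have h3 := Submodule.finrank_quotient_add_finrank W
    have h4 : Module.finrank ℝ (EuclideanSpace ℝ (Fin N₁)) = N₁ := finrank_euclideanSpace_fin
    have h5 : Module.finrank ℝ (EuclideanSpace ℝ (Fin N₂)) = N₂ := finrank_euclideanSpace_fin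
    rw [hker]
    have hk2 : (k₂ : ℕ) < N₂ := k₂.isLt
    omega
  -- intersection nontrivial
  have hinter : 0 < Module.finrank ℝ ↥(V ⊓ Submodule.comap Q W) := by
    have hsum := Submodule.finrank_sup_add_finrank_inf_eq V (Submodule.comap Q W)
    have hsup : Module.finrank ℝ ↥(V ⊔ Submodule.comap Q W) ≤ N₁ := by
      have := Submodule.finrank_le (V ⊔ Submodule.comap Q W)
      rwa [finrank_euclideanSpace_fin] at this
    have hk1 : (k₁ : ℕ) < N₁ := k₁.isLt
    omega
  obtain ⟨z, hz⟩ := Module.finrank_pos_iff_exists_ne_zero.mp hinter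
  obtain ⟨z, hzmem⟩ := z
  have hzV : z ∈ V := hzmem.1
  have hzW : Q z ∈ W := hzmem.2
  have hzne : z ≠ 0 := by
    simpa [Submodule.mk_eq_zero] using hz
  have hpos : (0:ℝ) < inner ℝ z z := by
    rcases lt_or_eq_of_le (real_inner_self_nonneg (x := z)) with h | h
    · exact h
    · exact absurd ((inner_self_eq_zero (𝕜 := ℝ) (x := z)).mp h.symm) hzne
  have chain : sortEig hM₁ k₁ * (inner ℝ z z : ℝ) ≤ sortEig hM₂ k₂ * (inner ℝ z z : ℝ) := by
    calc sortEig hM₁ k₁ * (inner ℝ z z : ℝ)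
        ≤ (inner ℝ z (Matrix.toEuclideanLin M₁ z) : ℝ) := mul_inner_le_of_mem_top hM₁ hzV
      _ ≤ (inner ℝ (Q z) (Matrix.toEuclideanLin M₂ (Q z)) : ℝ) := hQray z
      _ ≤ sortEig hM₂ k₂ * (inner ℝ (Q z) (Q z) : ℝ) := inner_le_mul_of_mem_bot hM₂ hzW
      _ = sortEig hM₂ k₂ * (inner ℝ z z : ℝ) := by rw [hQnorm]
  exact le_of_mul_le_mul_right chain hpos

end Compare

section Interlace

lemma inner_toEuclideanLin_conjTranspose_mul_self {s t : ℕ} (C : Matrix (Fin t) (Fin s) ℝ)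
    (x : EuclideanSpace ℝ (Fin s)) :
    (inner ℝ x (Matrix.toEuclideanLin (Cᴴ * C) x) : ℝ)
      = ∑ i, (C *ᵥ (WithLp.equiv 2 _ x)) i ^ 2 := by
  simp only [Matrix.toEuclideanLin_apply, PiLp.inner_apply, RCLike.inner_apply]
  have : ∀ j, (WithLp.equiv 2 (Fin s → ℝ)).symm ((Cᴴ * C) *ᵥ (WithLp.equiv 2 _ x)) j
      = ((Cᴴ * C) *ᵥ (WithLp.equiv 2 _ x)) j := fun j => rfl
  calc ∑ j, ((Cᴴ * C) *ᵥ (WithLp.equiv 2 _ x)) j * (starRingEnd ℝ) (x j)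
      = (WithLp.equiv 2 _ x) ⬝ᵥ ((Cᴴ * C) *ᵥ (WithLp.equiv 2 _ x)) := by
        simp [dotProduct, this, mul_comm]
    _ = (C *ᵥ (WithLp.equiv 2 _ x)) ⬝ᵥ (C *ᵥ (WithLp.equiv 2 _ x)) := by
        rw [← mulVec_mulVec, dotProduct_mulVec, vecMul_conjTranspose]
        simp [star_trivial]
    _ = ∑ i, (C *ᵥ (WithLp.equiv 2 _ x)) i ^ 2 := by
        simp [dotProduct, sq]

lemma interlace {m n s : ℕ} (A : Matrix (Fin m) (Fin n) ℝ) (il : Fin s → Fin m)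
    (jl : Fin s → Fin n) (hil : Function.Injective il) (hjl : Function.Injective jl)
    (k : Fin s) (k' : Fin n) (hk : (k : ℕ) = (k' : ℕ)) :
    sortEig (isHermitian_conjTranspose_mul_self (A.submatrix il jl)) k
      ≤ sortEig (isHermitian_conjTranspose_mul_self A) k' := by
  classical
  set Qmat : Matrix (Fin n) (Fin s) ℝ := Matrix.of (fun j p => if jl p = j then 1 else 0) with hQmat
  have hQval : ∀ (v : Fin s → ℝ) (q : Fin s), (Qmat *ᵥ v) (jl q) = v q := by
    intro v q
    simp only [mulVec, dotProduct, hQmat, Matrix.of_apply]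
    rw [Finset.sum_eq_single q]
    · simp
    · intro p _ hp
      simp [hjl.ne hp]
    · simp
  have hQzero : ∀ (v : Fin s → ℝ) (j : Fin n), j ∉ Finset.image jl Finset.univ →
      (Qmat *ᵥ v) j = 0 := by
    intro v j hj
    simp only [mulVec, dotProduct, hQmat, Matrix.of_apply]
    apply Finset.sum_eq_zero
    intro p _
    have : jl p ≠ j := fun h => hj (Finset.mem_image.mpr ⟨p, Finset.mem_univ _, h⟩)
    simp [this]
  refine sortEig_le_sortEig _ _ (Matrix.toEuclideanLin Qmat) ?_ ?_ k k' hk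
  · intro x
    simp only [PiLp.inner_apply, RCLike.inner_apply, Matrix.toEuclideanLin_apply]
    have hc : ∀ j, (WithLp.equiv 2 (Fin n → ℝ)).symm (Qmat *ᵥ (WithLp.equiv 2 _ x)) j
        = (Qmat *ᵥ (WithLp.equiv 2 _ x)) j := fun j => rfl
    simp only [starRingEnd_apply, star_trivial, hc]
    rw [← Finset.sum_subset (Finset.subset_univ (Finset.image jl Finset.univ))
      (fun j _ hj => by rw [hQzero _ j hj]; ring)]
    rw [Finset.sum_image (fun a _ b _ h => hjl h)]
    refine Finset.sum_congr rfl fun q _ => ?_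
    rw [hQval]
  · intro x
    have h1 := inner_toEuclideanLin_conjTranspose_mul_self (A.submatrix il jl) x
    have h2 := inner_toEuclideanLin_conjTranspose_mul_self A (Matrix.toEuclideanLin Qmat x)
    have hAconj : (A.submatrix il jl)ᴴ * (A.submatrix il jl) = (A.submatrix il jl)ᴴ * (A.submatrix il jl) := rfl
    rw [h1, h2]
    -- identify (A.submatrix il jl *ᵥ x) q with (A *ᵥ Q x) (il q)
    have key : ∀ q, (A.submatrix il jl *ᵥ (WithLp.equiv 2 _ x)) q
        = (A *ᵥ (WithLp.equiv 2 _ (Matrix.toEuclideanLin Qmat x))) (il q) := by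
      intro q
      have : (WithLp.equiv 2 (Fin n → ℝ)) (Matrix.toEuclideanLin Qmat x)
          = Qmat *ᵥ (WithLp.equiv 2 _ x) := by
        simp [Matrix.toEuclideanLin_apply]
      rw [this, mulVec_mulVec]
      simp only [mulVec, dotProduct, Matrix.submatrix_apply, Matrix.mul_apply, hQmat,
        Matrix.of_apply]
      refine Finset.sum_congr rfl fun p _ => ?_
      congr 1
      simp [mul_ite]
    calc ∑ q, (A.submatrix il jl *ᵥ (WithLp.equiv 2 _ x)) q ^ 2
        = ∑ q, (A *ᵥ (WithLp.equiv 2 _ (Matrix.toEuclideanLin Qmat x))) (il q) ^ 2 := by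
          exact Finset.sum_congr rfl fun q _ => by rw [key]
      _ = ∑ i ∈ Finset.image il Finset.univ,
            (A *ᵥ (WithLp.equiv 2 _ (Matrix.toEuclideanLin Qmat x))) i ^ 2 := by
          rw [Finset.sum_image (fun a _ b _ h => hil h)]
      _ ≤ ∑ i, (A *ᵥ (WithLp.equiv 2 _ (Matrix.toEuclideanLin Qmat x))) i ^ 2 :=
          Finset.sum_le_sum_of_subset_of_nonneg (Finset.subset_univ _)
            (fun i _ _ => sq_nonneg _)

end Interlace

section TraceId
variable {s : ℕ} (B : Matrix (Fin s) (Fin s) ℝ)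

lemma eig_pos_of_isUnit (hB : IsUnit B) (i : Fin s) :
    0 < (isHermitian_conjTranspose_mul_self B).eigenvalues i := by
  set hH := isHermitian_conjTranspose_mul_self B
  have hnn : ∀ j, 0 ≤ hH.eigenvalues j := fun j =>
    Matrix.eigenvalues_conjTranspose_mul_self_nonneg B j
  have hd : B.det ≠ 0 := by
    intro h
    exact ((Matrix.isUnit_iff_isUnit_det B).mp hB).ne_zero h
  have hdet : (Bᴴ * B).det ≠ 0 := by
    have : (Bᴴ * B).det = B.det * B.det := by
      rw [det_mul, det_conjTranspose]; simp
    rw [this]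
    exact mul_ne_zero hd hd
  have hprod : (Bᴴ * B).det = ∏ j, hH.eigenvalues j := by
    simpa using hH.det_eq_prod_eigenvalues
  rcases lt_or_eq_of_le (hnn i) with h | h
  · exact h
  · exact absurd (hprod ▸ Finset.prod_eq_zero (Finset.mem_univ i) h.symm) hdet

lemma trace_inv_eq_sum_inv_eig (hB : IsUnit B) :
    Matrix.trace ((Bᴴ * B)⁻¹) = ∑ i, ((isHermitian_conjTranspose_mul_self B).eigenvalues i)⁻¹ := by
  set hH := isHermitian_conjTranspose_mul_self B with hhH
  set ev : Fin s → ℝ := hH.eigenvalues with hev'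
  set U : Matrix (Fin s) (Fin s) ℝ := (hH.eigenvectorUnitary : Matrix (Fin s) (Fin s) ℝ) with hU
  have hmem := hH.eigenvectorUnitary.2
  rw [Unitary.mem_iff] at hmem
  have hUU : star U * U = 1 := hmem.1
  have hUU' : U * star U = 1 := hmem.2
  have hev : ∀ i, ev i ≠ 0 := fun i => (eig_pos_of_isUnit B hB i).ne'
  have hspec : Bᴴ * B = U * Matrix.diagonal ev * star U := by
    have h := hH.spectral_theorem
    rwa [RCLike.ofReal_real_eq_id, Function.id_comp] at h
  have hinv : (Bᴴ * B)⁻¹ = U * Matrix.diagonal (fun i => (ev i)⁻¹) * star U := by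
    apply Matrix.inv_eq_right_inv
    rw [hspec]
    calc U * Matrix.diagonal ev * star U *
          (U * Matrix.diagonal (fun i => (ev i)⁻¹) * star U)
        = U * Matrix.diagonal ev * ((star U * U) *
          (Matrix.diagonal (fun i => (ev i)⁻¹) * star U)) := by
          simp only [Matrix.mul_assoc]
      _ = U * (Matrix.diagonal ev *
          Matrix.diagonal (fun i => (ev i)⁻¹)) * star U := by
          rw [hUU, Matrix.one_mul]
          simp only [Matrix.mul_assoc]
      _ = 1 := by
          rw [Matrix.diagonal_mul_diagonal]
          have : (fun i => ev i * (ev i)⁻¹) = fun _ => (1:ℝ) := by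
            funext i; exact mul_inv_cancel₀ (hev i)
          rw [this, Matrix.diagonal_one, Matrix.mul_one, hUU']
  rw [hinv, Matrix.trace_mul_cycle, hUU, Matrix.one_mul, Matrix.trace_diagonal]

lemma sum_sq_inv_eq_trace (hB : IsUnit B) :
    ∑ p, ∑ q, (B⁻¹ p q)^2 = Matrix.trace ((Bᴴ * B)⁻¹) := by
  have hBinv : (Bᴴ * B)⁻¹ = B⁻¹ * (Bᴴ)⁻¹ := Matrix.mul_inv_rev _ _
  rw [hBinv, Matrix.trace]
  simp only [Matrix.diag_apply, Matrix.mul_apply]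
  refine Finset.sum_congr rfl fun p _ => Finset.sum_congr rfl fun q _ => ?_
  rw [← Matrix.conjTranspose_nonsing_inv]
  simp [Matrix.conjTranspose_apply, sq]
end TraceId

section Residual
variable {m n r : ℕ} (A : Matrix (Fin m) (Fin n) ℝ) (I : Fin r → Fin m) (J : Fin r → Fin n)

lemma resid_row_zero (hinv : IsUnit (A.submatrix I J)) (p : Fin r) (j : Fin n) :
    (A - A.submatrix id J * (A.submatrix I J)⁻¹ * A.submatrix I id) (I p) j = 0 := by
  set Mh := A.submatrix I J with hMh
  have hMM : Mh * Mh⁻¹ = 1 := Matrix.mul_nonsing_inv _ ((Matrix.isUnit_iff_isUnit_det _).mp hinv)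
  have key : (A.submatrix id J * Mh⁻¹ * A.submatrix I id) (I p) j = A (I p) j := by
    have h1 : ∀ q, (A.submatrix id J * Mh⁻¹) (I p) q = (1 : Matrix (Fin r) (Fin r) ℝ) p q := by
      intro q
      have : (A.submatrix id J * Mh⁻¹) (I p) q = (Mh * Mh⁻¹) p q := by
        simp [Matrix.mul_apply, hMh]
      rw [this, hMM]
    rw [Matrix.mul_apply]
    simp only [h1]
    simp [Matrix.one_apply]
  simp [key]

lemma resid_col_zero (hinv : IsUnit (A.submatrix I J)) (i : Fin m) (q : Fin r) :
    (A - A.submatrix id J * (A.submatrix I J)⁻¹ * A.submatrix I id) i (J q) = 0 := by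
  set Mh := A.submatrix I J with hMh
  have hMM : Mh⁻¹ * Mh = 1 := Matrix.nonsing_inv_mul _ ((Matrix.isUnit_iff_isUnit_det _).mp hinv)
  have key : (A.submatrix id J * Mh⁻¹ * A.submatrix I id) i (J q) = A i (J q) := by
    rw [Matrix.mul_assoc]
    have h1 : (Mh⁻¹ * A.submatrix I id) ⬝ᵥ (fun _ => 0) = 0 := by exact dotProduct_zero _
    have h2 : ∀ t, (Mh⁻¹ * A.submatrix I id) t (J q) = (Mh⁻¹ * Mh) t q := by
      intro t
      simp [Matrix.mul_apply, hMh]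
    rw [Matrix.mul_apply]
    simp only [h2]
    rw [hMM]
    simp [Matrix.mul_apply, Matrix.one_apply]
  simp [key]

lemma resid_det (hinv : IsUnit (A.submatrix I J)) (i : Fin m) (j : Fin n) :
    (A.submatrix (Sum.elim I (fun _ : Fin 1 => i)) (Sum.elim J (fun _ : Fin 1 => j))).det
      = (A.submatrix I J).det
        * (A - A.submatrix id J * (A.submatrix I J)⁻¹ * A.submatrix I id) i j := by
  set Mh := A.submatrix I J with hMh
  have hdet : IsUnit Mh.det := (Matrix.isUnit_iff_isUnit_det _).mp hinv
  haveI : Invertible Mh := Mh.invertibleOfIsUnitDet hdet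
  have hblock : A.submatrix (Sum.elim I (fun _ : Fin 1 => i)) (Sum.elim J (fun _ : Fin 1 => j))
      = Matrix.fromBlocks Mh (Matrix.of fun p (_ : Fin 1) => A (I p) j)
          (Matrix.of fun (_ : Fin 1) q => A i (J q)) (Matrix.of fun (_ : Fin 1) _ => A i j) := by
    ext (p | p) (q | q) <;> simp [Matrix.fromBlocks, hMh]
  rw [hblock, Matrix.det_fromBlocks₁₁]
  congr 1
  rw [Matrix.det_fin_one]
  simp only [Matrix.sub_apply, Matrix.mul_apply, Matrix.invOf_eq_nonsing_inv,
    Matrix.of_apply, Matrix.submatrix_apply, id_eq]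
end Residual

section Main

lemma sum_elim_inj {r mm : ℕ} {I : Fin r → Fin mm} {i : Fin mm}
    (hI : Function.Injective I) (hi : i ∉ Set.range I) :
    Function.Injective (Sum.elim I (fun _ : Fin 1 => i)) := by
  rintro (a | a) (b | b) h
  · rw [hI h]
  · exact absurd ⟨a, h⟩ hi
  · exact absurd ⟨b, h.symm⟩ hi
  · rw [Subsingleton.elim a b]

lemma sval_eq_sqrt_sortEig {m n : ℕ} (A : Matrix (Fin m) (Fin n) ℝ) (k : Fin n) :
    sval A k = Real.sqrt (sortEig (Matrix.isHermitian_conjTranspose_mul_self A) k) := rfl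

lemma sortEig_AHA_nonneg {m n : ℕ} (A : Matrix (Fin m) (Fin n) ℝ) (k : Fin n) :
    0 ≤ sortEig (Matrix.isHermitian_conjTranspose_mul_self A) k :=
  Matrix.eigenvalues_conjTranspose_mul_self_nonneg A _

lemma sq_sval {m n : ℕ} (A : Matrix (Fin m) (Fin n) ℝ) (k : Fin n) :
    sval A k ^ 2 = sortEig (Matrix.isHermitian_conjTranspose_mul_self A) k := by
  rw [sval_eq_sqrt_sortEig, Real.sq_sqrt (sortEig_AHA_nonneg A k)]

theorem entry_bound {m n r : ℕ} (hrm : r < m) (hrn : r < n)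
    (A : Matrix (Fin m) (Fin n) ℝ) (I : Fin r → Fin m) (J : Fin r → Fin n)
    (hI : Function.Injective I) (hJ : Function.Injective J)
    (hinv : IsUnit (A.submatrix I J))
    (Imax : Fin r → Fin m) (Jmax : Fin r → Fin n)
    (hmax : ∀ (I' : Fin r → Fin m) (J' : Fin r → Fin n),
      Function.Injective I' → Function.Injective J' →
        |(A.submatrix I' J').det| ≤ |(A.submatrix Imax Jmax).det|)
    (ν : ℝ) (hν : ν ∈ Set.Ioc (0 : ℝ) 1)
    (hvol : |(A.submatrix I J).det| = ν * |(A.submatrix Imax Jmax).det|)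
    (i : Fin m) (j : Fin n) :
    |(A - A.submatrix id J * (A.submatrix I J)⁻¹ * A.submatrix I id) i j|
      ≤ (r + 1) * sval A ⟨r, hrn⟩ / (ν * Real.sqrt (1 + ∑ k : Fin r,
          sval A ⟨r, hrn⟩ ^ 2 / sval A ⟨k.1, lt_trans k.2 hrn⟩ ^ 2)) := by
  classical
  have hν0 : 0 < ν := hν.1
  have hMdet : (A.submatrix I J).det ≠ 0 := by
    intro h
    exact (((Matrix.isUnit_iff_isUnit_det _).mp hinv).ne_zero) h
  set D : ℝ := |(A.submatrix Imax Jmax).det| with hD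
  have hDpos : 0 < D := by
    have h0 : ν * D ≠ 0 := by rw [← hvol]; exact abs_ne_zero.mpr hMdet
    have hD0 : D ≠ 0 := fun h => h0 (by rw [h, mul_zero])
    exact lt_of_le_of_ne (abs_nonneg _) (Ne.symm hD0)
  have hRHSnn : 0 ≤ (r + 1) * sval A ⟨r, hrn⟩ / (ν * Real.sqrt (1 + ∑ k : Fin r,
      sval A ⟨r, hrn⟩ ^ 2 / sval A ⟨k.1, lt_trans k.2 hrn⟩ ^ 2)) := by
    apply div_nonneg
    · apply mul_nonneg
      · positivity
      · exact Real.sqrt_nonneg _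
    · exact mul_nonneg hν0.le (Real.sqrt_nonneg _)
  by_cases hiI : i ∈ Set.range I
  · obtain ⟨p, rfl⟩ := hiI
    rw [resid_row_zero A I J hinv p j, abs_zero]
    exact hRHSnn
  by_cases hjJ : j ∈ Set.range J
  · obtain ⟨q, rfl⟩ := hjJ
    rw [resid_col_zero A I J hinv i q, abs_zero]
    exact hRHSnn
  -- fresh row and column
  set il : Fin (r+1) → Fin m := (Sum.elim I (fun _ : Fin 1 => i)) ∘ finSumFinEquiv.symm with hil'
  set jl : Fin (r+1) → Fin n := (Sum.elim J (fun _ : Fin 1 => j)) ∘ finSumFinEquiv.symm with hjl'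
  have hil : Function.Injective il := (sum_elim_inj hI hiI).comp finSumFinEquiv.symm.injective
  have hjl : Function.Injective jl := (sum_elim_inj hJ hjJ).comp finSumFinEquiv.symm.injective
  set Bmat : Matrix (Fin (r+1)) (Fin (r+1)) ℝ := A.submatrix il jl with hBmat
  have hdetB : Bmat.det = (A.submatrix I J).det
      * (A - A.submatrix id J * (A.submatrix I J)⁻¹ * A.submatrix I id) i j := by
    have h1 : Bmat = (A.submatrix (Sum.elim I (fun _ : Fin 1 => i))
        (Sum.elim J (fun _ : Fin 1 => j))).submatrix finSumFinEquiv.symm finSumFinEquiv.symm := by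
      rw [hBmat, Matrix.submatrix_submatrix]
    rw [h1, Matrix.det_submatrix_equiv_self, resid_det A I J hinv i j]
  by_cases hBu : IsUnit Bmat
  case neg =>
    have hdB0 : Bmat.det = 0 := by
      by_contra h
      exact hBu ((Matrix.isUnit_iff_isUnit_det _).mpr (isUnit_iff_ne_zero.mpr h))
    have hE0 : (A - A.submatrix id J * (A.submatrix I J)⁻¹ * A.submatrix I id) i j = 0 := by
      have := hdetB
      rw [hdB0] at this
      exact (mul_eq_zero.mp this.symm).resolve_left hMdet
    rw [hE0, abs_zero]
    exact hRHSnn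
  case pos =>
    have hdB0 : Bmat.det ≠ 0 := ((Matrix.isUnit_iff_isUnit_det _).mp hBu).ne_zero
    have htB : ∀ k : Fin (r+1), 0 < sortEig (Matrix.isHermitian_conjTranspose_mul_self Bmat) k :=
      fun k => eig_pos_of_isUnit Bmat hBu _
    have hkn : ∀ k : Fin (r+1), (k : ℕ) < n :=
      fun k => lt_of_le_of_lt (Nat.lt_succ_iff.mp k.2) hrn
    set tA : Fin (r+1) → ℝ :=
      fun k => sortEig (Matrix.isHermitian_conjTranspose_mul_self A) ⟨k.1, hkn k⟩ with htA'
    have hint : ∀ k, sortEig (Matrix.isHermitian_conjTranspose_mul_self Bmat) k ≤ tA k :=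
      fun k => interlace A il jl hil hjl k ⟨k.1, hkn k⟩ rfl
    have htA : ∀ k, 0 < tA k := fun k => lt_of_lt_of_le (htB k) (hint k)
    have hadj : ∀ p q : Fin (r+1), |Bmat.adjugate p q| ≤ D := by
      intro p q
      rw [Matrix.adjugate_fin_succ_eq_det_submatrix, abs_mul, abs_pow, abs_neg, abs_one,
        one_pow, one_mul, hBmat, Matrix.submatrix_submatrix]
      exact hmax _ _ (hil.comp (Fin.succAbove_right_injective))
        (hjl.comp (Fin.succAbove_right_injective))
    have hadjsum : ∑ p, ∑ q, (Bmat.adjugate p q)^2 ≤ ((r:ℝ)+1)^2 * D^2 := by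
      calc ∑ p, ∑ q, (Bmat.adjugate p q)^2 ≤ ∑ p : Fin (r+1), ∑ q : Fin (r+1), D^2 := by
            refine Finset.sum_le_sum fun p _ => Finset.sum_le_sum fun q _ => ?_
            rw [← sq_abs]
            exact pow_le_pow_left₀ (abs_nonneg _) (hadj p q) 2
        _ = ((r:ℝ)+1)^2 * D^2 := by
            simp [Finset.sum_const]
            ring
    have hadj_eq : ∀ p q, Bmat.adjugate p q = Bmat.det * Bmat⁻¹ p q := by
      intro p q
      rw [Matrix.inv_def, Matrix.smul_apply, Ring.inverse_eq_inv', smul_eq_mul,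
        ← mul_assoc, mul_inv_cancel₀ hdB0, one_mul]
    have hsum_eq : ∑ p, ∑ q, (Bmat.adjugate p q)^2
        = Bmat.det^2 * ∑ k, (sortEig (Matrix.isHermitian_conjTranspose_mul_self Bmat) k)⁻¹ := by
      have h1 : ∑ p, ∑ q, (Bmat.adjugate p q)^2 = Bmat.det^2 * ∑ p, ∑ q, (Bmat⁻¹ p q)^2 := by
        simp only [Finset.mul_sum]
        refine Finset.sum_congr rfl fun p _ => Finset.sum_congr rfl fun q _ => ?_
        rw [hadj_eq p q, mul_pow]
      rw [h1, sum_sq_inv_eq_trace Bmat hBu, trace_inv_eq_sum_inv_eig Bmat hBu,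
        ← sum_comp_sortEig (Matrix.isHermitian_conjTranspose_mul_self Bmat) (fun t => t⁻¹)]
    set T : ℝ := ∑ k : Fin (r+1), (tA k)⁻¹ with hT'
    have hTB : T ≤ ∑ k, (sortEig (Matrix.isHermitian_conjTranspose_mul_self Bmat) k)⁻¹ :=
      Finset.sum_le_sum fun k _ => inv_anti₀ (htB k) (hint k)
    have hTpos : 0 < T :=
      Finset.sum_pos (fun k _ => inv_pos.mpr (htA k)) Finset.univ_nonempty
    have hkey : Bmat.det^2 * T ≤ ((r:ℝ)+1)^2 * D^2 := by
      calc Bmat.det^2 * T ≤ Bmat.det^2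
            * ∑ k, (sortEig (Matrix.isHermitian_conjTranspose_mul_self Bmat) k)⁻¹ :=
            mul_le_mul_of_nonneg_left hTB (sq_nonneg _)
        _ = ∑ p, ∑ q, (Bmat.adjugate p q)^2 := hsum_eq.symm
        _ ≤ ((r:ℝ)+1)^2 * D^2 := hadjsum
    -- rewrite the residual entry
    have hE : (A - A.submatrix id J * (A.submatrix I J)⁻¹ * A.submatrix I id) i j
        = Bmat.det / (A.submatrix I J).det := by
      rw [hdetB, mul_comm, mul_div_assoc, div_self hMdet, mul_one]
    have hEabs : |(A - A.submatrix id J * (A.submatrix I J)⁻¹ * A.submatrix I id) i j|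
        = |Bmat.det| / (ν * D) := by
      rw [hE, abs_div, hvol]
    have haval : sval A ⟨r, hrn⟩ = Real.sqrt (tA (Fin.last r)) := rfl
    have hsq_last : sval A ⟨r, hrn⟩ ^ 2 = tA (Fin.last r) := sq_sval A ⟨r, hrn⟩
    have hsq_k : ∀ k : Fin r, sval A ⟨k.1, lt_trans k.2 hrn⟩ ^ 2 = tA (Fin.castSucc k) :=
      fun k => sq_sval A _
    have hsum1 : 1 + ∑ k : Fin r, sval A ⟨r, hrn⟩ ^ 2 / sval A ⟨k.1, lt_trans k.2 hrn⟩ ^ 2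
        = tA (Fin.last r) * T := by
      rw [hT', Finset.mul_sum]
      rw [Fin.sum_univ_castSucc (f := fun k : Fin (r+1) => tA (Fin.last r) * (tA k)⁻¹)]
      rw [mul_inv_cancel₀ (htA (Fin.last r)).ne']
      rw [add_comm]
      congr 1
      refine Finset.sum_congr rfl fun k _ => ?_
      rw [hsq_last, hsq_k k, div_eq_mul_inv]
    have hfinal : |Bmat.det| * Real.sqrt T ≤ ((r:ℝ)+1) * D := by
      have h2 : (|Bmat.det| * Real.sqrt T)^2 ≤ (((r:ℝ)+1) * D)^2 := by
        rw [mul_pow, sq_abs, Real.sq_sqrt hTpos.le, mul_pow]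
        exact hkey
      have hnn1 : 0 ≤ |Bmat.det| * Real.sqrt T := mul_nonneg (abs_nonneg _) (Real.sqrt_nonneg _)
      have hnn2 : 0 ≤ ((r:ℝ)+1) * D := mul_nonneg (by positivity) hDpos.le
      exact (pow_le_pow_iff_left₀ hnn1 hnn2 two_ne_zero).mp h2
    have hsqrta : 0 < Real.sqrt (tA (Fin.last r)) := Real.sqrt_pos.mpr (htA _)
    have hsqrtT : 0 < Real.sqrt T := Real.sqrt_pos.mpr hTpos
    rw [hEabs, hsum1, haval]
    rw [Real.sqrt_mul (htA (Fin.last r)).le]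
    rw [div_le_div_iff₀ (mul_pos hν0 hDpos) (mul_pos hν0 (mul_pos hsqrta hsqrtT))]
    calc |Bmat.det| * (ν * (Real.sqrt (tA (Fin.last r)) * Real.sqrt T))
        = (ν * Real.sqrt (tA (Fin.last r))) * (|Bmat.det| * Real.sqrt T) := by ring
      _ ≤ (ν * Real.sqrt (tA (Fin.last r))) * (((r:ℝ)+1) * D) :=
          mul_le_mul_of_nonneg_left hfinal (mul_nonneg hν0.le hsqrta.le)
      _ = ((r:ℝ)+1) * Real.sqrt (tA (Fin.last r)) * (ν * D) := by ring

end Main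

theorem stmt11 {m n r : ℕ} (hrm : r < m) (hrn : r < n)
    (A : Matrix (Fin m) (Fin n) ℝ) (I : Fin r → Fin m) (J : Fin r → Fin n)
    (hI : Function.Injective I) (hJ : Function.Injective J)
    (hinv : IsUnit (A.submatrix I J))
    (Imax : Fin r → Fin m) (Jmax : Fin r → Fin n)
    (hImax : Function.Injective Imax) (hJmax : Function.Injective Jmax)
    (hmax : ∀ (I' : Fin r → Fin m) (J' : Fin r → Fin n),
      Function.Injective I' → Function.Injective J' →
        |(A.submatrix I' J').det| ≤ |(A.submatrix Imax Jmax).det|)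
    (ν : ℝ) (hν : ν ∈ Set.Ioc (0 : ℝ) 1)
    (hvol : |(A.submatrix I J).det| = ν * |(A.submatrix Imax Jmax).det|)
    (hdom : ∀ (i : Fin m) (p : Fin r),
      |(A.submatrix id J * (A.submatrix I J)⁻¹) i p| ≤ 1) :
    chebNorm (A - A.submatrix id J * (A.submatrix I J)⁻¹ * A.submatrix I id)
      ≤ (r + 1) * sval A ⟨r, hrn⟩ / (ν * Real.sqrt (1 + ∑ k : Fin r, sval A ⟨r, hrn⟩ ^ 2 / sval A ⟨k.1, lt_trans k.2 hrn⟩ ^ 2)) := by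
  haveI : Nonempty (Fin m) := ⟨⟨0, lt_of_le_of_lt (Nat.zero_le r) hrm⟩⟩
  haveI : Nonempty (Fin n) := ⟨⟨0, lt_of_le_of_lt (Nat.zero_le r) hrn⟩⟩
  rw [chebNorm]
  exact ciSup_le fun i => ciSup_le fun j =>
    entry_bound hrm hrn A I J hI hJ hinv Imax Jmax hmax ν hν hvol i j
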